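/- Let β ∈ ℝ with β ≠ 1. The function u(x,t) := β x e^{β t} / (β − 2 + e^{β t}), defined for all (x,t) with β − 2 + e^{β t} ≠ 0, satisfies ∂u/∂t (x,t) + u(x,t) · ∂u/∂x (x,t) = β · u(x,t) at every such point, and satisfies the initial condition u(x,0) = β x/(β − 1) for all x ∈ ℝ. -/

import Mathlib

/-- Worked example of Section 4: `u(x,t) = β x e^{βt}/(β - 2 + e^{βt})` solves the
Burgers equation with linear source term `β u`, with `u(x,0) = β x/(β - 1)`. -/
theorem stmt_8 (β : ℝ) (hβ : β ≠ 1) :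
    (∀ x t : ℝ, β - 2 + Real.exp (β * t) ≠ 0 →
        deriv (fun τ => β * x * Real.exp (β * τ) / (β - 2 + Real.exp (β * τ))) t
          + β * x * Real.exp (β * t) / (β - 2 + Real.exp (β * t))
            * deriv (fun ξ => β * ξ * Real.exp (β * t) / (β - 2 + Real.exp (β * t))) x
          = β * (β * x * Real.exp (β * t) / (β - 2 + Real.exp (β * t)))) ∧
      ∀ x : ℝ,
        β * x * Real.exp (β * 0) / (β - 2 + Real.exp (β * 0)) = β * x / (β - 1) := by
  constructor
  · intro x t hD
    set E := Real.exp (β * t) with hE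
    have hexp : HasDerivAt (fun τ : ℝ => Real.exp (β * τ)) (β * E) t := by
      simpa [hE, mul_comm, Function.comp_def] using (Real.hasDerivAt_exp (β * t)).comp t
        ((hasDerivAt_id t).const_mul β)
    have hnum : HasDerivAt (fun τ : ℝ => β * x * Real.exp (β * τ))
        (β * x * (β * E)) t := hexp.const_mul _
    have hden : HasDerivAt (fun τ : ℝ => β - 2 + Real.exp (β * τ)) (β * E) t := by
      simpa [Pi.add_def] using (hasDerivAt_const t (β - 2)).add hexp
    have ht : HasDerivAt (fun τ : ℝ => β * x * Real.exp (β * τ) / (β - 2 + Real.exp (β * τ)))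
        ((β * x * (β * E) * (β - 2 + E) - β * x * E * (β * E)) / (β - 2 + E) ^ 2) t :=
      hnum.div hden hD
    have hx : HasDerivAt (fun ξ : ℝ => β * ξ * Real.exp (β * t) / (β - 2 + Real.exp (β * t)))
        (β * E / (β - 2 + E)) x := by
      have : HasDerivAt (fun ξ : ℝ => β * ξ * E / (β - 2 + E))
          (β * 1 * E / (β - 2 + E)) x := by
        simpa [mul_div_assoc] using ((hasDerivAt_id x).const_mul β).mul_const (E / (β - 2 + E))
      simpa using this
    rw [ht.deriv, hx.deriv]
    field_simp
    ring
  · intro x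
    have : β - 2 + Real.exp (β * 0) = β - 1 := by simp; ring
    rw [this, mul_comm β 0]
    simp
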